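/- Let F_1, …, F_m be events in a probability space with P(F_i) ≤ p^k for all i in some subset D_1 of size m̄ with P(F_i) = p^k exactly for i ∈ D_1, P(F_i) ≤ p^(k+1) for i ∉ D_1, and P(F_i ∩ F_j) ≤ p^(k+1) for all distinct i, j ∈ D_1, P(F_i ∩ F_j) ≤ p^(k+2) if i or j ∉ D_1. If 0 < p ≤ ε/m with 0 < ε < 1, then (1-ε)·m̄·p^k ≤ P(⋃_{i=1}^m F_i) ≤ (1+ε)·m̄·p^k. -/

import Mathlib

open MeasureTheory

lemma bonferroni_aux {Ω : Type*} [MeasurableSpace Ω] (μ : Measure Ω) [IsFiniteMeasure μ]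
    {ι : Type*} [DecidableEq ι] (F : ι → Set Ω) (hF : ∀ i, MeasurableSet (F i)) (s : Finset ι) :
    (∑ i ∈ s, (μ (F i)).toReal) - ∑ x ∈ s.offDiag, (μ (F x.1 ∩ F x.2)).toReal
      ≤ (μ (⋃ i ∈ s, F i)).toReal := by
  induction s using Finset.induction with
  | empty => simp
  | @insert a s ha ih =>
    set B : Set Ω := ⋃ i ∈ s, F i with hB
    have hBm : MeasurableSet B := by
      exact Finset.measurableSet_biUnion s fun i _ => hF i
    have hunion : (⋃ i ∈ insert a s, F i) = F a ∪ B := by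
      simp [hB, Set.biUnion_insert]
    have key : μ (F a ∪ B) + μ (F a ∩ B) = μ (F a) + μ B :=
      measure_union_add_inter (F a) hBm
    have hfin : ∀ t : Set Ω, μ t ≠ ⊤ := fun t => measure_ne_top μ t
    have key' : (μ (F a ∪ B)).toReal + (μ (F a ∩ B)).toReal
        = (μ (F a)).toReal + (μ B).toReal := by
      rw [← ENNReal.toReal_add (hfin _) (hfin _), ← ENNReal.toReal_add (hfin _) (hfin _), key]
    have hcap : (μ (F a ∩ B)).toReal ≤ ∑ j ∈ s, (μ (F a ∩ F j)).toReal := by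
      have h1 : F a ∩ B = ⋃ j ∈ s, (F a ∩ F j) := by
        simp [hB, Set.inter_iUnion]
      have h2 : μ (F a ∩ B) ≤ ∑ j ∈ s, μ (F a ∩ F j) := by
        rw [h1]; exact measure_biUnion_finset_le s _
      calc (μ (F a ∩ B)).toReal ≤ (∑ j ∈ s, μ (F a ∩ F j)).toReal :=
            ENNReal.toReal_mono (ENNReal.sum_ne_top.2 fun j _ => hfin _) h2
        _ = ∑ j ∈ s, (μ (F a ∩ F j)).toReal := ENNReal.toReal_sum fun j _ => hfin _
    have hsub : s.offDiag ∪ ({a} ×ˢ s) ⊆ (insert a s).offDiag := by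
      rw [Finset.offDiag_insert ha]
      intro x hx
      rcases Finset.mem_union.1 hx with h | h
      · exact Finset.mem_union.2 (Or.inl (Finset.mem_union.2 (Or.inl h)))
      · exact Finset.mem_union.2 (Or.inl (Finset.mem_union.2 (Or.inr h)))
    have hdisj : Disjoint s.offDiag ({a} ×ˢ s) := by
      rw [Finset.disjoint_left]
      rintro ⟨x, y⟩ hx hy
      simp only [Finset.mem_product, Finset.mem_singleton] at hy
      have := (Finset.mem_offDiag.1 hx).1
      rw [hy.1] at this
      exact ha this
    have hoff : ∑ x ∈ s.offDiag, (μ (F x.1 ∩ F x.2)).toReal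
        + ∑ j ∈ s, (μ (F a ∩ F j)).toReal
        ≤ ∑ x ∈ (insert a s).offDiag, (μ (F x.1 ∩ F x.2)).toReal := by
      have h1 : ∑ x ∈ ({a} ×ˢ s : Finset (ι × ι)), (μ (F x.1 ∩ F x.2)).toReal
          = ∑ j ∈ s, (μ (F a ∩ F j)).toReal := by
        rw [Finset.sum_product, Finset.sum_singleton]
      rw [← h1, ← Finset.sum_union hdisj]
      exact Finset.sum_le_sum_of_subset_of_nonneg hsub fun x _ _ => ENNReal.toReal_nonneg
    rw [hunion, Finset.sum_insert ha]
    have hBge : (∑ i ∈ s, (μ (F i)).toReal) - ∑ x ∈ s.offDiag, (μ (F x.1 ∩ F x.2)).toReal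
        ≤ (μ B).toReal := ih
    linarith

theorem stmt_5 {Ω : Type*} [MeasurableSpace Ω] (μ : Measure Ω) [IsProbabilityMeasure μ]
    (m : ℕ) (hm : 0 < m) (F : Fin m → Set Ω) (hF : ∀ i, MeasurableSet (F i))
    (D1 : Finset (Fin m)) (mbar k : ℕ) (hmbar : D1.card = mbar) (hmbar1 : 1 ≤ mbar)
    (p ε : ℝ) (hε : ε ∈ Set.Ioo (0:ℝ) 1) (hp0 : 0 < p) (hpm : p ≤ ε / m)
    (hD1 : ∀ i ∈ D1, (μ (F i)).toReal = p ^ k)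
    (hD1c : ∀ i ∉ D1, (μ (F i)).toReal ≤ p ^ (k + 1))
    (hpair : ∀ i ∈ D1, ∀ j ∈ D1, i ≠ j → (μ (F i ∩ F j)).toReal ≤ p ^ (k + 1))
    (hpair' : ∀ i j : Fin m, i ≠ j → (i ∉ D1 ∨ j ∉ D1) →
      (μ (F i ∩ F j)).toReal ≤ p ^ (k + 2)) :
    (1 - ε) * mbar * p ^ k ≤ (μ (⋃ i, F i)).toReal ∧
      (μ (⋃ i, F i)).toReal ≤ (1 + ε) * mbar * p ^ k := by
  obtain ⟨hε0, hε1⟩ := hε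
  have hfin : ∀ t : Set Ω, μ t ≠ ⊤ := fun t => measure_ne_top μ t
  have hpk : (0:ℝ) < p ^ k := pow_pos hp0 k
  have hmp : (m:ℝ) * p ≤ ε := by
    have hm' : (0:ℝ) < m := Nat.cast_pos.2 hm
    rw [le_div_iff₀ hm'] at hpm
    linarith [hpm]
  have hmbarle : (mbar:ℝ) ≤ m := by
    have := D1.card_le_univ
    rw [hmbar] at this
    exact_mod_cast this.trans_eq (by simp)
  have hmbar1' : (1:ℝ) ≤ mbar := by exact_mod_cast hmbar1
  constructor
  · -- lower bound
    have hsub : (⋃ i ∈ D1, F i) ⊆ ⋃ i, F i := Set.iUnion₂_subset fun i _ => Set.subset_iUnion F i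
    have hmono : (μ (⋃ i ∈ D1, F i)).toReal ≤ (μ (⋃ i, F i)).toReal :=
      ENNReal.toReal_mono (hfin _) (measure_mono hsub)
    have hbonf := bonferroni_aux μ F hF D1
    have hsum1 : ∑ i ∈ D1, (μ (F i)).toReal = (mbar:ℝ) * p ^ k := by
      rw [Finset.sum_congr rfl hD1, Finset.sum_const, hmbar, nsmul_eq_mul]
    have hsum2 : ∑ x ∈ D1.offDiag, (μ (F x.1 ∩ F x.2)).toReal
        ≤ (mbar:ℝ) * ε * p ^ k := by
      have hle : ∀ x ∈ D1.offDiag, (μ (F x.1 ∩ F x.2)).toReal ≤ p ^ (k+1) := by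
        rintro ⟨i, j⟩ hx
        obtain ⟨hi, hj, hij⟩ := Finset.mem_offDiag.1 hx
        exact hpair i hi j hj hij
      calc ∑ x ∈ D1.offDiag, (μ (F x.1 ∩ F x.2)).toReal
          ≤ ∑ _x ∈ D1.offDiag, p ^ (k+1) := Finset.sum_le_sum hle
        _ = (D1.offDiag.card : ℝ) * p ^ (k+1) := by rw [Finset.sum_const, nsmul_eq_mul]
        _ ≤ ((mbar:ℝ) * m) * p ^ (k+1) := by
            apply mul_le_mul_of_nonneg_right _ (le_of_lt (pow_pos hp0 _))
            rw [Finset.offDiag_card, hmbar]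
            have hmm : mbar ≤ m := by
              have := D1.card_le_univ
              simpa [hmbar] using this
            have h1 : mbar * mbar - mbar ≤ mbar * m := by
              have := Nat.mul_le_mul_left mbar hmm
              exact le_trans (Nat.sub_le _ _) this
            exact_mod_cast h1
        _ = (mbar:ℝ) * ((m:ℝ) * p) * p ^ k := by ring
        _ ≤ (mbar:ℝ) * ε * p ^ k := by
            apply mul_le_mul_of_nonneg_right _ (le_of_lt hpk)
            exact mul_le_mul_of_nonneg_left hmp (by positivity)
    have := hsum1 ▸ hbonf
    nlinarith [hmono, this, hsum2]
  · -- upper bound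
    have hub : (μ (⋃ i, F i)).toReal ≤ ∑ i : Fin m, (μ (F i)).toReal := by
      calc (μ (⋃ i, F i)).toReal ≤ (∑ i : Fin m, μ (F i)).toReal :=
            ENNReal.toReal_mono (ENNReal.sum_ne_top.2 fun j _ => hfin _)
              ((measure_iUnion_le F).trans_eq (by rw [tsum_fintype]))
        _ = ∑ i : Fin m, (μ (F i)).toReal := ENNReal.toReal_sum fun j _ => hfin _
    have hsplit : ∑ i : Fin m, (μ (F i)).toReal
        = ∑ i ∈ D1, (μ (F i)).toReal + ∑ i ∈ D1ᶜ, (μ (F i)).toReal :=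
      (Finset.sum_add_sum_compl D1 _).symm
    have h1 : ∑ i ∈ D1, (μ (F i)).toReal = (mbar:ℝ) * p ^ k := by
      rw [Finset.sum_congr rfl hD1, Finset.sum_const, hmbar, nsmul_eq_mul]
    have h2 : ∑ i ∈ D1ᶜ, (μ (F i)).toReal ≤ (m:ℝ) * p ^ (k+1) := by
      calc ∑ i ∈ D1ᶜ, (μ (F i)).toReal ≤ ∑ _i ∈ D1ᶜ, p ^ (k+1) :=
            Finset.sum_le_sum fun i hi => hD1c i (Finset.mem_compl.1 hi)
        _ = (D1ᶜ.card : ℝ) * p ^ (k+1) := by rw [Finset.sum_const, nsmul_eq_mul]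
        _ ≤ (m:ℝ) * p ^ (k+1) := by
            apply mul_le_mul_of_nonneg_right _ (le_of_lt (pow_pos hp0 _))
            have := D1ᶜ.card_le_univ
            have h3 : (D1ᶜ.card : ℝ) ≤ (Finset.univ : Finset (Fin m)).card := by exact_mod_cast this
            simpa using h3
    have h4 : (m:ℝ) * p ^ (k+1) ≤ ε * mbar * p ^ k := by
      have : (m:ℝ) * p ^ (k+1) = ((m:ℝ) * p) * p ^ k := by ring
      rw [this]
      have h5 : ((m:ℝ) * p) * p ^ k ≤ ε * p ^ k :=
        mul_le_mul_of_nonneg_right hmp (le_of_lt hpk)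
      have h6 : ε * p ^ k ≤ ε * (mbar:ℝ) * p ^ k := by
        nlinarith [mul_pos hε0 hpk]
      linarith
    have hgoal : (1 + ε) * (mbar:ℝ) * p ^ k = (mbar:ℝ) * p ^ k + ε * (mbar:ℝ) * p ^ k := by
      ring
    rw [hgoal]
    linarith [hub, hsplit, h1, h2, h4]
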